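/- For n ≥ 1, the number of even 321-avoiding permutations in S_{2n} equals the number of odd 321-avoiding permutations in S_{2n}; equivalently, the sum of (-1)^{inv(π)} over 321-avoiding π in S_{2n} is 0. -/

import Mathlib

open Finset

/-- A permutation is 321-avoiding if it has no decreasing subsequence of length 3. -/
def Avoids321 {n : ℕ} (π : Equiv.Perm (Fin n)) : Prop :=
  ¬ ∃ i j k : Fin n, i < j ∧ j < k ∧ π k < π j ∧ π j < π i

instance {n : ℕ} : DecidablePred (Avoids321 (n := n)) := fun π =>
  decidable_of_iff (¬ ∃ i j k : Fin n, i < j ∧ j < k ∧ π k < π j ∧ π j < π i) Iff.rfl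

/-- The set `T_n` of 321-avoiding permutations of order `n`. -/
def Tset (n : ℕ) : Finset (Equiv.Perm (Fin n)) :=
  Finset.univ.filter (fun π => Avoids321 π)

/-- The value `π(i)` in one-based notation: positions `1,…,n`, values `1,…,n`. -/
def pval {n : ℕ} (π : Equiv.Perm (Fin n)) (i : ℕ) : ℕ :=
  if h : i - 1 < n then (π ⟨i - 1, h⟩ : ℕ) + 1 else 0

/-- The descent set `Des(π) = {1 ≤ i ≤ n-1 : π(i) > π(i+1)}` (one-based). -/
def desSet {n : ℕ} (π : Equiv.Perm (Fin n)) : Finset ℕ :=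
  (Finset.Icc 1 (n - 1)).filter (fun i => pval π (i + 1) < pval π i)

/-- The last descent of `π` (0 for the identity). -/
def ldes {n : ℕ} (π : Equiv.Perm (Fin n)) : ℕ := (desSet π).sup id

/-- `lind(π) = π⁻¹(n)`, the (one-based) position of the letter `n` in `π`. -/
def lind {n : ℕ} (π : Equiv.Perm (Fin n)) : ℕ := pval π.symm n

/-- The inversion number of `π`. -/
def invNum {n : ℕ} (π : Equiv.Perm (Fin n)) : ℕ :=
  (Finset.univ.filter (fun q : Fin n × Fin n => q.1 < q.2 ∧ π q.2 < π q.1)).card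

/-- A ±1 sequence of length `2n` (`true` = +1) is a Dyck path if it has `n` up
steps and every prefix has at least as many up steps as down steps. -/
def IsDyckPred (n : ℕ) (p : Fin (2 * n) → Bool) : Prop :=
  (Finset.univ.filter (fun i => p i = true)).card = n ∧
  ∀ k ≤ 2 * n,
    k ≤ 2 * (Finset.univ.filter (fun i : Fin (2 * n) => (i : ℕ) < k ∧ p i = true)).card

instance (n : ℕ) : DecidablePred (IsDyckPred n) := fun p => by
  unfold IsDyckPred; infer_instance

/-- The set `P_n` of Dyck paths of length `2n`. -/
def DyckPath (n : ℕ) : Type := { p : Fin (2 * n) → Bool // IsDyckPred n p }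

instance (n : ℕ) : Fintype (DyckPath n) := by unfold DyckPath; infer_instance

/-- The `i`-th step of the path, one-based; `true` = +1, `false` = -1. -/
def pstep {n : ℕ} (p : DyckPath n) (i : ℕ) : Bool :=
  if h : i - 1 < 2 * n then p.1 ⟨i - 1, h⟩ else false

/-- `Des(p) = {1 ≤ i ≤ n-1 : p_i = +1, p_{i+1} = -1}`. -/
def pathDes {n : ℕ} (p : DyckPath n) : Finset ℕ :=
  (Finset.Icc 1 (n - 1)).filter (fun i => pstep p i = true ∧ pstep p (i + 1) = false)

/-- `Des(p⁻¹) = {1 ≤ i ≤ n-1 : p_{2n-i} = +1, p_{2n-i+1} = -1}`. -/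
def pathDesInv {n : ℕ} (p : DyckPath n) : Finset ℕ :=
  (Finset.Icc 1 (n - 1)).filter
    (fun i => pstep p (2 * n - i) = true ∧ pstep p (2 * n - i + 1) = false)

/-- `ldes(p) = max{1 ≤ i ≤ n-1 : p_i = +1, p_{i+1} = -1}` (0 if none). -/
def pathLdes {n : ℕ} (p : DyckPath n) : ℕ := (pathDes p).sup id

/-- `lind(p) = max{1 ≤ i ≤ n : p_i = +1, p_{i+1} = -1}` (0 if none). -/
def pathLind {n : ℕ} (p : DyckPath n) : ℕ :=
  ((Finset.Icc 1 n).filter (fun i => pstep p i = true ∧ pstep p (i + 1) = false)).sup id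

/-- `tail(p) = 2n - max{i : p_i = +1, p_{i+1} = -1}`, the number of consecutive
down steps at the end of `p`. -/
def pathTail {n : ℕ} (p : DyckPath n) : ℕ :=
  2 * n -
    ((Finset.Icc 1 (2 * n - 1)).filter
      (fun i => pstep p i = true ∧ pstep p (i + 1) = false)).sup id

open Equiv

namespace SB


variable {m : ℕ}

/-- Insert the maximum value at position `p`. -/
def ins (σ : Perm (Fin m)) (p : Fin (m + 1)) : Perm (Fin (m + 1)) :=
  ((finSuccEquiv' p).trans σ.optionCongr).trans (finSuccEquiv' (Fin.last m)).symm

lemma ins_apply_self (σ : Perm (Fin m)) (p : Fin (m + 1)) : ins σ p p = Fin.last m := by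
  simp [ins, finSuccEquiv'_at, finSuccEquiv'_symm_none]

lemma ins_apply_succAbove (σ : Perm (Fin m)) (p : Fin (m + 1)) (k : Fin m) :
    ins σ p (p.succAbove k) = (σ k).castSucc := by
  simp [ins, finSuccEquiv'_succAbove, finSuccEquiv'_symm_some, Fin.succAbove_last]

/-- Delete the maximum value. -/
def del (π : Perm (Fin (m + 1))) : Perm (Fin m) :=
  Equiv.removeNone
    (((finSuccEquiv' (π.symm (Fin.last m))).symm.trans π).trans (finSuccEquiv' (Fin.last m)))

lemma symm_ins_last (σ : Perm (Fin m)) (p : Fin (m + 1)) :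
    (ins σ p).symm (Fin.last m) = p := by
  rw [Equiv.symm_apply_eq, ins_apply_self]

lemma del_ins (σ : Perm (Fin m)) (p : Fin (m + 1)) : del (ins σ p) = σ := by
  ext k
  have h : (((finSuccEquiv' ((ins σ p).symm (Fin.last m))).symm.trans (ins σ p)).trans
      (finSuccEquiv' (Fin.last m))) (some k) = some (σ k) := by
    rw [symm_ins_last]
    simp only [Equiv.trans_apply, finSuccEquiv'_symm_some, ins_apply_succAbove]
    exact finSuccEquiv'_last_apply_castSucc _
  have h2 := Equiv.removeNone_some _ ⟨σ k, h⟩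
  rw [h] at h2
  have h3 : (((finSuccEquiv' ((ins σ p).symm (Fin.last m))).symm.trans (ins σ p)).trans
      (finSuccEquiv' (Fin.last m))).removeNone k = σ k := Option.some_injective _ h2
  simp [del, h3]

lemma ins_del (π : Perm (Fin (m + 1))) : ins (del π) (π.symm (Fin.last m)) = π := by
  set p := π.symm (Fin.last m) with hp
  ext i
  rcases eq_or_ne i p with rfl | hne
  · rw [ins_apply_self]
    simp [hp]
  · obtain ⟨k, rfl⟩ := Fin.exists_succAbove_eq hne
    rw [ins_apply_succAbove]
    have hne2 : π (p.succAbove k) ≠ Fin.last m := by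
      intro h
      refine Fin.succAbove_ne p k ?_
      rw [hp, Equiv.eq_symm_apply]
      exact h
    have h : (((finSuccEquiv' p).symm.trans π).trans (finSuccEquiv' (Fin.last m))) (some k)
        = some ((π (p.succAbove k)).castPred hne2) := by
      simp only [Equiv.trans_apply, finSuccEquiv'_symm_some]
      conv_lhs => rw [← Fin.castSucc_castPred (π (p.succAbove k)) hne2]
      exact finSuccEquiv'_last_apply_castSucc _
    have h2 := Equiv.removeNone_some _ ⟨_, h⟩
    rw [h] at h2
    have h3 := Option.some_injective _ h2
    rw [del, ← hp, h3, Fin.castSucc_castPred]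

def IncrAfter (σ : Perm (Fin m)) (t : ℕ) : Prop :=
  ∀ k l : Fin m, t ≤ (k : ℕ) → k < l → σ k < σ l

lemma lt_succAbove (p : Fin (m + 1)) (k : Fin m) (h : (p : ℕ) ≤ (k : ℕ)) :
    p < p.succAbove k :=
  (Fin.lt_succAbove_iff_le_castSucc p k).mpr (by rwa [Fin.le_def, Fin.coe_castSucc])

lemma avoids_ins_iff (σ : Perm (Fin m)) (p : Fin (m + 1)) :
    Avoids321 (ins σ p) ↔ Avoids321 σ ∧ IncrAfter σ (p : ℕ) := by
  constructor
  · intro h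
    constructor
    · rintro ⟨i, j, k, hij, hjk, h1, h2⟩
      exact h ⟨p.succAbove i, p.succAbove j, p.succAbove k,
        Fin.succAbove_lt_succAbove_iff.mpr hij, Fin.succAbove_lt_succAbove_iff.mpr hjk,
        by simpa only [ins_apply_succAbove, Fin.castSucc_lt_castSucc_iff] using h1,
        by simpa only [ins_apply_succAbove, Fin.castSucc_lt_castSucc_iff] using h2⟩
    · intro k l hk hkl
      by_contra hc
      have hlk : σ l < σ k :=
        lt_of_le_of_ne (not_lt.mp hc) (fun he => (ne_of_lt hkl) (σ.injective he.symm))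
      exact h ⟨p, p.succAbove k, p.succAbove l, lt_succAbove p k hk,
        Fin.succAbove_lt_succAbove_iff.mpr hkl,
        by simpa only [ins_apply_succAbove, Fin.castSucc_lt_castSucc_iff] using hlk,
        by rw [ins_apply_succAbove, ins_apply_self]; exact Fin.castSucc_lt_last _⟩
  · rintro ⟨ha, hi⟩ ⟨i, j, k, hij, hjk, h1, h2⟩
    have hj : j ≠ p := by
      intro he
      rw [he, ins_apply_self] at h2
      exact absurd h2 (Fin.not_lt.mpr (Fin.le_last _))
    have hk : k ≠ p := by
      intro he
      rw [he, ins_apply_self] at h1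
      exact absurd h1 (Fin.not_lt.mpr (Fin.le_last _))
    obtain ⟨j', rfl⟩ := Fin.exists_succAbove_eq hj
    obtain ⟨k', rfl⟩ := Fin.exists_succAbove_eq hk
    rcases eq_or_ne i p with rfl | hip
    · have hpj : (i : ℕ) ≤ (j' : ℕ) := by
        have := (Fin.lt_succAbove_iff_le_castSucc i j').mp hij
        rwa [Fin.le_def, Fin.coe_castSucc] at this
      have hjk' : j' < k' := Fin.succAbove_lt_succAbove_iff.mp hjk
      have : σ k' < σ j' := by
        rw [ins_apply_succAbove, ins_apply_succAbove, Fin.castSucc_lt_castSucc_iff] at h1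
        exact h1
      exact absurd (hi j' k' hpj hjk') (not_lt.mpr (le_of_lt this))
    · obtain ⟨i', rfl⟩ := Fin.exists_succAbove_eq hip
      refine ha ⟨i', j', k', Fin.succAbove_lt_succAbove_iff.mp hij,
        Fin.succAbove_lt_succAbove_iff.mp hjk, ?_, ?_⟩
      · rw [ins_apply_succAbove, ins_apply_succAbove, Fin.castSucc_lt_castSucc_iff] at h1
        exact h1
      · rw [ins_apply_succAbove, ins_apply_succAbove, Fin.castSucc_lt_castSucc_iff] at h2
        exact h2

lemma card_tail (p : Fin (m + 1)) :
    (univ.filter (fun b : Fin m => (p : ℕ) ≤ (b : ℕ))).card = m - (p : ℕ) := by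
  rw [Finset.card_filter]
  rw [Fin.sum_univ_eq_sum_range (fun x => if (p : ℕ) ≤ x then 1 else 0) m]
  rw [← Finset.card_filter]
  have : (Finset.range m).filter (fun x => (p : ℕ) ≤ x) = Finset.Ico (p : ℕ) m := by
    ext x
    simp only [Finset.mem_filter, Finset.mem_range, Finset.mem_Ico]
    omega
  rw [this, Nat.card_Ico]

lemma invNum_ins (σ : Perm (Fin m)) (p : Fin (m + 1)) :
    invNum (ins σ p) = invNum σ + (m - (p : ℕ)) := by
  classical
  have hS : (univ.filter (fun q : Fin (m+1) × Fin (m+1) =>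
        q.1 < q.2 ∧ (ins σ p) q.2 < (ins σ p) q.1))
      = ((univ.filter (fun q : Fin m × Fin m => q.1 < q.2 ∧ σ q.2 < σ q.1)).image
          (fun q => (p.succAbove q.1, p.succAbove q.2)))
        ∪ ((univ.filter (fun b : Fin m => (p : ℕ) ≤ (b : ℕ))).image
          (fun b => (p, p.succAbove b))) := by
    ext q
    simp only [mem_union, mem_image, mem_filter, mem_univ, true_and]
    constructor
    · rintro ⟨hlt, hinv⟩
      have hq2 : q.2 ≠ p := by
        intro he
        rw [he, ins_apply_self] at hinv
        exact absurd hinv (Fin.not_lt.mpr (Fin.le_last _))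
      obtain ⟨b2, hb2⟩ := Fin.exists_succAbove_eq hq2
      rcases eq_or_ne q.1 p with he1 | hne1
      · right
        refine ⟨b2, ?_, ?_⟩
        · have : p < p.succAbove b2 := by rw [hb2, ← he1]; exact hlt
          have := (Fin.lt_succAbove_iff_le_castSucc p b2).mp this
          rwa [Fin.le_def, Fin.coe_castSucc] at this
        · rw [hb2, ← he1]
      · left
        obtain ⟨b1, hb1⟩ := Fin.exists_succAbove_eq hne1
        refine ⟨(b1, b2), ⟨?_, ?_⟩, ?_⟩
        · rw [← Fin.succAbove_lt_succAbove_iff (p := p), hb1, hb2]; exact hlt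
        · rw [← Fin.castSucc_lt_castSucc_iff, ← ins_apply_succAbove σ p,
            ← ins_apply_succAbove σ p, hb1, hb2]
          exact hinv
        · rw [hb1, hb2]
    · rintro (⟨b, ⟨hblt, hbinv⟩, hbe⟩ | ⟨b, hble, hbe⟩)
      · rw [← hbe]
        exact ⟨Fin.succAbove_lt_succAbove_iff.mpr hblt,
          by rw [ins_apply_succAbove, ins_apply_succAbove];
             exact Fin.castSucc_lt_castSucc_iff.mpr hbinv⟩
      · rw [← hbe]
        exact ⟨lt_succAbove p b hble,
          by rw [ins_apply_succAbove, ins_apply_self]; exact Fin.castSucc_lt_last _⟩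
  rw [invNum, hS, Finset.card_union_of_disjoint, Finset.card_image_of_injective,
    Finset.card_image_of_injective, card_tail, invNum]
  · intro b1 b2 he
    exact Fin.succAbove_right_injective (p := p) (by simpa using (Prod.ext_iff.mp he).2)
  · intro q1 q2 he
    have h1 := (Prod.ext_iff.mp he).1
    have h2 := (Prod.ext_iff.mp he).2
    exact Prod.ext (Fin.succAbove_right_injective h1) (Fin.succAbove_right_injective h2)
  · rw [Finset.disjoint_left]
    rintro q hqA hqB
    simp only [mem_image, mem_filter, mem_univ, true_and] at hqA hqB
    obtain ⟨b, _, hbe⟩ := hqA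
    obtain ⟨b', _, hbe'⟩ := hqB
    have h1 : p.succAbove b.1 = q.1 := (Prod.ext_iff.mp hbe).1
    have h2 : p = q.1 := (Prod.ext_iff.mp hbe').1
    exact Fin.succAbove_ne p b.1 (h1.trans h2.symm)

lemma mem_desSet {N : ℕ} (π : Perm (Fin N)) (i : ℕ) :
    i ∈ desSet π ↔ ∃ (_ : 1 ≤ i) (h2 : i < N),
      π ⟨i, h2⟩ < π ⟨i - 1, by omega⟩ := by
  rw [desSet, mem_filter, Finset.mem_Icc]
  constructor
  · rintro ⟨⟨h1, h2⟩, h3⟩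
    have h2' : i < N := by omega
    refine ⟨h1, h2', ?_⟩
    rw [pval, pval] at h3
    rw [dif_pos (show i + 1 - 1 < N by omega), dif_pos (show i - 1 < N by omega)] at h3
    simp only [Nat.add_sub_cancel] at h3
    exact Fin.lt_def.mpr (Nat.lt_of_succ_lt_succ h3)
  · rintro ⟨h1, h2, h3⟩
    refine ⟨⟨h1, by omega⟩, ?_⟩
    rw [pval, pval, dif_pos (show i + 1 - 1 < N by omega),
      dif_pos (show i - 1 < N by omega)]
    rw [Fin.lt_def] at h3
    have h4 : (π ⟨i + 1 - 1, by omega⟩ : ℕ) < (π ⟨i - 1, by omega⟩ : ℕ) := h3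
    omega

lemma ldes_le_iff {N : ℕ} (π : Perm (Fin N)) (t : ℕ) :
    ldes π ≤ t ↔ ∀ i ∈ desSet π, i ≤ t := by
  rw [ldes, Finset.sup_le_iff]
  rfl

lemma incrAfter_iff_ldes_le (σ : Perm (Fin m)) (t : ℕ) :
    IncrAfter σ t ↔ ldes σ ≤ t := by
  constructor
  · intro hI
    rw [ldes_le_iff]
    intro i hi
    rw [mem_desSet] at hi
    obtain ⟨h1, h2, h3⟩ := hi
    by_contra hc
    have hlt : (⟨i - 1, by omega⟩ : Fin m) < ⟨i, h2⟩ := by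
      rw [Fin.lt_def]; simp; omega
    exact absurd (hI ⟨i - 1, by omega⟩ ⟨i, h2⟩ (by simp; omega) hlt)
      (not_lt.mpr (le_of_lt h3))
  · intro hl
    have adj : ∀ j : ℕ, t ≤ j → ∀ (hj : j + 1 < m),
        σ ⟨j, by omega⟩ < σ ⟨j + 1, hj⟩ := by
      intro j htj hj
      by_contra hc
      have hne : σ ⟨j + 1, hj⟩ ≠ σ ⟨j, by omega⟩ :=
        fun he => by
          have := σ.injective he
          simp only [Fin.mk.injEq] at this
          omega
      have hdes : (j + 1) ∈ desSet σ := by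
        rw [mem_desSet]
        refine ⟨by omega, hj, ?_⟩
        exact lt_of_le_of_ne (not_lt.mp hc) hne
      have := (ldes_le_iff σ t).mp hl _ hdes
      omega
    have key : ∀ c : ℕ, ∀ j : ℕ, t ≤ j → ∀ (hlt : j + 1 + c < m),
        σ ⟨j, by omega⟩ < σ ⟨j + 1 + c, hlt⟩ := by
      intro c
      induction c with
      | zero => intro j htj hlt; exact adj j htj hlt
      | succ c ih =>
        intro j htj hlt
        have h1 : j + 1 + c < m := by omega
        refine lt_trans (ih j htj h1) ?_
        exact adj (j + 1 + c) (by omega) (by omega)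
    intro k l hk hkl
    have hkl' : (k : ℕ) < (l : ℕ) := hkl
    have h1 : (k : ℕ) + 1 + ((l : ℕ) - (k : ℕ) - 1) < m := by
      have := l.isLt; omega
    have hkey := key ((l : ℕ) - (k : ℕ) - 1) (k : ℕ) hk h1
    have e : (⟨(k : ℕ) + 1 + ((l : ℕ) - (k : ℕ) - 1), h1⟩ : Fin m) = l := by
      apply Fin.ext
      show (k : ℕ) + 1 + ((l : ℕ) - (k : ℕ) - 1) = (l : ℕ)
      omega
    rw [e] at hkey
    exact hkey

lemma ins_apply_of_lt (σ : Perm (Fin m)) (p : Fin (m + 1)) {j : ℕ} (hj : j < (p : ℕ))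
    (h : j < m + 1) (hm : j < m) :
    ins σ p ⟨j, h⟩ = (σ ⟨j, hm⟩).castSucc := by
  have e : (⟨j, h⟩ : Fin (m + 1)) = p.succAbove ⟨j, hm⟩ := by
    rw [Fin.succAbove_of_castSucc_lt _ _ (by rw [Fin.lt_def]; exact hj)]
    rfl
  rw [e, ins_apply_succAbove]

lemma ins_apply_of_gt (σ : Perm (Fin m)) (p : Fin (m + 1)) {j : ℕ} (hj : (p : ℕ) < j)
    (h : j < m + 1) :
    ins σ p ⟨j, h⟩ = (σ ⟨j - 1, by omega⟩).castSucc := by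
  have e : (⟨j, h⟩ : Fin (m + 1)) = p.succAbove ⟨j - 1, by omega⟩ := by
    rw [Fin.succAbove_of_le_castSucc _ _ (by rw [Fin.le_def]; simp; omega)]
    apply Fin.ext
    simp [Fin.val_succ]
    omega
  rw [e, ins_apply_succAbove]

lemma ldes_ins_of_lt (σ : Perm (Fin m)) (p : Fin (m + 1)) (hp : (p : ℕ) < m)
    (hI : IncrAfter σ (p : ℕ)) :
    ldes (ins σ p) = (p : ℕ) + 1 := by
  apply le_antisymm
  · rw [ldes_le_iff]
    intro i hi
    rw [mem_desSet] at hi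
    obtain ⟨h1, h2, h3⟩ := hi
    by_contra hc
    push_neg at hc
    have hgt : (p : ℕ) + 2 ≤ i := hc
    rw [ins_apply_of_gt σ p (by omega) h2,
      ins_apply_of_gt σ p (by omega) (by omega)] at h3
    have h4 : σ ⟨i - 1, by omega⟩ < σ ⟨i - 1 - 1, by omega⟩ :=
      Fin.castSucc_lt_castSucc_iff.mp h3
    have h5 : σ ⟨i - 1 - 1, by omega⟩ < σ ⟨i - 1, by omega⟩ := by
      apply hI
      · show (p : ℕ) ≤ i - 1 - 1
        omega
      · rw [Fin.lt_def]
        show i - 1 - 1 < i - 1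
        omega
    exact absurd h4 (not_lt.mpr (le_of_lt h5))
  · have hmem : (p : ℕ) + 1 ∈ desSet (ins σ p) := by
      rw [mem_desSet]
      refine ⟨by omega, by omega, ?_⟩
      have e1 : (⟨(p : ℕ) + 1 - 1, by omega⟩ : Fin (m + 1)) = p := by
        apply Fin.ext
        show (p : ℕ) + 1 - 1 = (p : ℕ)
        omega
      rw [e1, ins_apply_self, ins_apply_of_gt σ p (by omega) (by omega)]
      exact Fin.castSucc_lt_last _
    exact Finset.le_sup (f := id) hmem

lemma ldes_ins_of_eq (σ : Perm (Fin m)) (p : Fin (m + 1)) (hp : (p : ℕ) = m) :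
    ldes (ins σ p) = ldes σ := by
  have hdes : desSet (ins σ p) = desSet σ := by
    ext i
    rw [mem_desSet, mem_desSet]
    constructor
    · rintro ⟨h1, h2, h3⟩
      have him : i < m := by
        by_contra hc
        have hi : i = m := by omega
        have e : (⟨i, h2⟩ : Fin (m + 1)) = p := by
          apply Fin.ext
          show i = (p : ℕ)
          omega
        rw [e, ins_apply_self] at h3
        exact absurd h3 (Fin.not_lt.mpr (Fin.le_last _))
      refine ⟨h1, him, ?_⟩
      rw [ins_apply_of_lt σ p (by omega) h2 him,
        ins_apply_of_lt σ p (by omega) (by omega) (by omega)] at h3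
      exact Fin.castSucc_lt_castSucc_iff.mp h3
    · rintro ⟨h1, h2, h3⟩
      refine ⟨h1, by omega, ?_⟩
      rw [ins_apply_of_lt σ p (by omega) (by omega) h2,
        ins_apply_of_lt σ p (by omega) (by omega) (by omega)]
      exact Fin.castSucc_lt_castSucc_iff.mpr h3
  rw [ldes, hdes, ldes]

lemma master (m : ℕ) (F : Perm (Fin (m + 1)) → ℤ) :
    ∑ π ∈ Tset (m + 1), F π =
      ∑ σ ∈ Tset m, ∑ p ∈ univ.filter (fun p : Fin (m + 1) => ldes σ ≤ (p : ℕ)),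
        F (ins σ p) := by
  symm
  rw [Finset.sum_sigma']
  refine Finset.sum_nbij' (fun x => ins x.1 x.2)
    (fun π => ⟨del π, π.symm (Fin.last m)⟩) ?_ ?_ ?_ ?_ ?_
  · rintro ⟨σ, p⟩ hx
    rw [Finset.mem_sigma, Tset, mem_filter] at hx
    obtain ⟨⟨_, hσ⟩, hp⟩ := hx
    rw [mem_filter] at hp
    rw [Tset, mem_filter]
    refine ⟨mem_univ _, ?_⟩
    rw [avoids_ins_iff]
    exact ⟨hσ, (incrAfter_iff_ldes_le σ _).mpr hp.2⟩
  · intro π hπ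
    rw [Tset, mem_filter] at hπ
    have hins := ins_del π
    have hav : Avoids321 (ins (del π) (π.symm (Fin.last m))) := by rw [hins]; exact hπ.2
    rw [avoids_ins_iff] at hav
    rw [Finset.mem_sigma, Tset, mem_filter, mem_filter]
    exact ⟨⟨mem_univ _, hav.1⟩, mem_univ _, (incrAfter_iff_ldes_le _ _).mp hav.2⟩
  · rintro ⟨σ, p⟩ _
    have h1 := del_ins σ p
    have h2 := symm_ins_last σ p
    simp only []
    rw [Sigma.mk.inj_iff]
    constructor
    · rw [h1]
    · rw [h2]
  · intro π _
    exact ins_del π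
  · rintro ⟨σ, p⟩ _
    rfl

lemma ldes_le_pred {N : ℕ} (π : Perm (Fin N)) : ldes π ≤ N - 1 := by
  rw [ldes_le_iff]
  intro i hi
  rw [desSet, mem_filter, Finset.mem_Icc] at hi
  exact hi.1.2

def cs (N e : ℕ) : ℤ :=
  ∑ π ∈ (Tset N).filter (fun π => ldes π = e), (-1 : ℤ) ^ invNum π

def Scs (N t : ℕ) : ℤ :=
  ∑ π ∈ (Tset N).filter (fun π => ldes π ≤ t), (-1 : ℤ) ^ invNum π

def gc (N e : ℕ) : ℤ :=
  ∑ π ∈ (Tset N).filter (fun π => ldes π = e), (1 : ℤ)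

def Sg (N t : ℕ) : ℤ :=
  ∑ π ∈ (Tset N).filter (fun π => ldes π ≤ t), (1 : ℤ)

lemma Scs_zero (N : ℕ) : Scs N 0 = cs N 0 := by
  unfold Scs cs
  congr 1
  apply Finset.filter_congr
  intro π _
  simp [Nat.le_zero]

lemma Sg_zero (N : ℕ) : Sg N 0 = gc N 0 := by
  unfold Sg gc
  congr 1
  apply Finset.filter_congr
  intro π _
  simp [Nat.le_zero]

lemma filter_le_succ (N t : ℕ) (f : Perm (Fin N) → ℤ) :
    ∑ π ∈ (Tset N).filter (fun π => ldes π ≤ t + 1), f π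
      = ∑ π ∈ (Tset N).filter (fun π => ldes π ≤ t), f π
        + ∑ π ∈ (Tset N).filter (fun π => ldes π = t + 1), f π := by
  rw [← Finset.sum_filter_add_sum_filter_not ((Tset N).filter (fun π => ldes π ≤ t + 1))
    (fun π => ldes π ≤ t)]
  congr 1
  · congr 1
    rw [Finset.filter_filter]
    apply Finset.filter_congr
    intro π _
    omega
  · congr 1
    rw [Finset.filter_filter]
    apply Finset.filter_congr
    intro π _
    omega

lemma Scs_succ (N t : ℕ) : Scs N (t + 1) = Scs N t + cs N (t + 1) :=
  filter_le_succ N t _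

lemma Sg_succ (N t : ℕ) : Sg N (t + 1) = Sg N t + gc N (t + 1) :=
  filter_le_succ N t _

lemma cs_support {N e : ℕ} (h1 : 1 ≤ e) (h2 : N ≤ e) : cs N e = 0 := by
  unfold cs
  rw [Finset.filter_false_of_mem, Finset.sum_empty]
  intro π _
  have := ldes_le_pred π
  omega

lemma gc_support {N e : ℕ} (h1 : 1 ≤ e) (h2 : N ≤ e) : gc N e = 0 := by
  unfold gc
  rw [Finset.filter_false_of_mem, Finset.sum_empty]
  intro π _
  have := ldes_le_pred π
  omega

lemma sum_filter_fin_eq (d : ℕ) (G : ℕ → ℤ) :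
    ∑ p ∈ univ.filter (fun p : Fin (m + 1) => d ≤ (p : ℕ)), G (p : ℕ)
      = ∑ x ∈ Finset.Icc d m, G x := by
  rw [Finset.sum_filter]
  rw [Fin.sum_univ_eq_sum_range (fun x => if d ≤ x then G x else 0) (m + 1)]
  rw [← Finset.sum_filter]
  congr 1
  ext x
  simp only [Finset.mem_filter, Finset.mem_range, Finset.mem_Icc]
  omega

lemma inner_eval (M d e : ℕ) (hd : d ≤ M) (W : ℕ → ℤ) :
    ∑ x ∈ Finset.Icc d M, (if (if x = M then d else x + 1) = e then W x else 0)
      = (if d = e then W M else 0)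
        + (if 1 ≤ e ∧ e ≤ M ∧ d ≤ e - 1 then W (e - 1) else 0) := by
  have hsplit : Finset.Icc d M = Finset.Ico d M ∪ {M} := by
    ext x
    simp only [Finset.mem_Icc, Finset.mem_union, Finset.mem_Ico, Finset.mem_singleton]
    omega
  rw [hsplit, Finset.sum_union (by simp [Finset.disjoint_singleton_right])]
  rw [Finset.sum_singleton, if_pos rfl]
  rw [add_comm]
  congr 1
  · have : ∀ x ∈ Finset.Ico d M,
        (if (if x = M then d else x + 1) = e then W x else 0)
          = (if x + 1 = e then W x else 0) := by
      intro x hx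
      rw [Finset.mem_Ico] at hx
      rw [if_neg (show ¬ x = M by omega)]
    rw [Finset.sum_congr rfl this]
    rcases e with _ | e'
    · rw [if_neg (by omega)]
      apply Finset.sum_eq_zero
      intro x _
      rw [if_neg (by omega)]
    · have : ∀ x ∈ Finset.Ico d M,
          (if x + 1 = e' + 1 then W x else 0) = (if x = e' then W x else 0) := by
        intro x _
        congr 1
        simp [Nat.succ_inj]
      rw [Finset.sum_congr rfl this, Finset.sum_ite_eq' (Finset.Ico d M) e' W]
      simp only [Finset.mem_Ico, Nat.add_sub_cancel]
      by_cases hc : d ≤ e' ∧ e' < M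
      · rw [if_pos hc, if_pos (by omega)]
      · rw [if_neg hc, if_neg (by omega)]

def csu (u : ℤ) (N e : ℕ) : ℤ :=
  ∑ π ∈ (Tset N).filter (fun π => ldes π = e), u ^ invNum π

def Su (u : ℤ) (N t : ℕ) : ℤ :=
  ∑ π ∈ (Tset N).filter (fun π => ldes π ≤ t), u ^ invNum π

lemma csu_neg_one (N e : ℕ) : csu (-1) N e = cs N e := rfl

lemma Su_neg_one (N t : ℕ) : Su (-1) N t = Scs N t := rfl

lemma csu_one (N e : ℕ) : csu 1 N e = gc N e := by
  unfold csu gc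
  exact Finset.sum_congr rfl (fun π _ => one_pow _)

lemma Su_one (N t : ℕ) : Su 1 N t = Sg N t := by
  unfold Su Sg
  exact Finset.sum_congr rfl (fun π _ => one_pow _)

lemma rec_general (u : ℤ) (m e : ℕ) :
    csu u (m + 1) e = csu u m e
      + (if 1 ≤ e ∧ e ≤ m then u ^ (m + 1 - e) * Su u m (e - 1) else 0) := by
  rw [csu, Finset.sum_filter,
    master m (fun π => if ldes π = e then u ^ invNum π else 0)]
  have step : ∀ σ ∈ Tset m,
      (∑ p ∈ univ.filter (fun p : Fin (m + 1) => ldes σ ≤ (p : ℕ)),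
        (if ldes (ins σ p) = e then u ^ invNum (ins σ p) else 0))
      = (if ldes σ = e then u ^ invNum σ else 0)
        + (if 1 ≤ e ∧ e ≤ m ∧ ldes σ ≤ e - 1 then
            u ^ invNum σ * u ^ (m + 1 - e) else 0) := by
    intro σ _
    have hd : ldes σ ≤ m := le_trans (ldes_le_pred σ) (Nat.sub_le m 1)
    have hpt : ∀ p ∈ univ.filter (fun p : Fin (m + 1) => ldes σ ≤ (p : ℕ)),
        (if ldes (ins σ p) = e then u ^ invNum (ins σ p) else 0)
        = (fun x : ℕ => if (if x = m then ldes σ else x + 1) = e then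
            u ^ invNum σ * u ^ (m - x) else 0) (p : ℕ) := by
      intro p hp
      rw [mem_filter] at hp
      have hInc : IncrAfter σ (p : ℕ) := (incrAfter_iff_ldes_le σ _).mpr hp.2
      have hinv : u ^ invNum (ins σ p) = u ^ invNum σ * u ^ (m - (p : ℕ)) := by
        rw [invNum_ins, pow_add]
      show (if ldes (ins σ p) = e then u ^ invNum (ins σ p) else 0)
        = (if (if (p : ℕ) = m then ldes σ else (p : ℕ) + 1) = e then
            u ^ invNum σ * u ^ (m - (p : ℕ)) else 0)
      rcases eq_or_ne ((p : ℕ)) m with hpm | hpm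
      · rw [ldes_ins_of_eq σ p hpm, if_pos hpm, hinv]
      · have hplt : (p : ℕ) < m := by have := p.isLt; omega
        rw [ldes_ins_of_lt σ p hplt hInc, if_neg hpm, hinv]
    rw [Finset.sum_congr rfl hpt]
    rw [sum_filter_fin_eq (ldes σ)
      (fun x : ℕ => if (if x = m then ldes σ else x + 1) = e then
        u ^ invNum σ * u ^ (m - x) else 0)]
    rw [inner_eval m (ldes σ) e hd (fun x => u ^ invNum σ * u ^ (m - x))]
    congr 1
    · by_cases h : ldes σ = e
      · rw [if_pos h, if_pos h, Nat.sub_self, pow_zero, mul_one]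
      · rw [if_neg h, if_neg h]
    · by_cases h : 1 ≤ e ∧ e ≤ m ∧ ldes σ ≤ e - 1
      · rw [if_pos h, if_pos h]
        congr 2
        omega
      · rw [if_neg h, if_neg h]
  rw [Finset.sum_congr rfl step, Finset.sum_add_distrib]
  congr 1
  · rw [csu, Finset.sum_filter]
  · by_cases hc : 1 ≤ e ∧ e ≤ m
    · rw [if_pos hc]
      have : ∀ σ ∈ Tset m,
          (if 1 ≤ e ∧ e ≤ m ∧ ldes σ ≤ e - 1 then
            u ^ invNum σ * u ^ (m + 1 - e) else 0)
          = (if ldes σ ≤ e - 1 then u ^ invNum σ else 0) * u ^ (m + 1 - e) := by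
        intro σ _
        by_cases h2 : ldes σ ≤ e - 1
        · rw [if_pos ⟨hc.1, hc.2, h2⟩, if_pos h2]
        · rw [if_neg (fun hh => h2 hh.2.2), if_neg h2, zero_mul]
      rw [Finset.sum_congr rfl this, ← Finset.sum_mul, mul_comm]
      congr 1
      rw [Su, Finset.sum_filter]
    · rw [if_neg hc]
      apply Finset.sum_eq_zero
      intro σ _
      rw [if_neg (fun hh => hc ⟨hh.1, hh.2.1⟩)]

lemma cs_rec (M e : ℕ) :
    cs (M + 1) e = cs M e
      + (if 1 ≤ e ∧ e ≤ M then (-1 : ℤ) ^ (M + 1 - e) * Scs M (e - 1) else 0) := by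
  have h := rec_general (-1) M e
  rwa [csu_neg_one, csu_neg_one, Su_neg_one] at h

lemma gc_rec (M e : ℕ) :
    gc (M + 1) e = gc M e + (if 1 ≤ e ∧ e ≤ M then Sg M (e - 1) else 0) := by
  have h := rec_general 1 M e
  rw [csu_one, csu_one, Su_one, one_pow, one_mul] at h
  exact h

lemma ldes_small {N : ℕ} (hN : N ≤ 1) (π : Perm (Fin N)) : ldes π = 0 := by
  have := ldes_le_pred π
  omega

lemma avoids_one : Avoids321 (1 : Perm (Fin 1)) := by
  rintro ⟨i, j, k, hij, -, -, -⟩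
  rw [Subsingleton.elim i j] at hij
  exact lt_irrefl _ hij

lemma avoids_zero : Avoids321 (1 : Perm (Fin 0)) := by
  rintro ⟨i, -, -, -, -, -, -⟩
  exact i.elim0

lemma univ_perm_one : (Finset.univ : Finset (Perm (Fin 1))) = {1} := by
  ext π
  simp only [Finset.mem_univ, Finset.mem_singleton, true_iff]
  exact Equiv.ext (fun i => Subsingleton.elim _ _)

lemma univ_perm_zero : (Finset.univ : Finset (Perm (Fin 0))) = {1} := by
  ext π
  simp only [Finset.mem_univ, Finset.mem_singleton, true_iff]
  exact Equiv.ext (fun i => i.elim0)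

lemma invNum_small {N : ℕ} (hN : N ≤ 1) (π : Perm (Fin N)) : invNum π = 0 := by
  rw [invNum, Finset.card_eq_zero, Finset.filter_eq_empty_iff]
  rintro q - ⟨h1, -⟩
  have : q.1 = q.2 := by
    apply Fin.ext
    have := q.1.isLt
    have := q.2.isLt
    omega
  rw [this] at h1
  exact lt_irrefl _ h1

lemma cs_one (e : ℕ) : cs 1 e = if e = 0 then 1 else 0 := by
  rw [cs, Tset, univ_perm_one, Finset.filter_singleton, if_pos avoids_one,
    Finset.filter_singleton]
  rw [ldes_small (le_refl 1) 1]
  by_cases he : e = 0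
  · rw [he, if_pos rfl, Finset.sum_singleton, invNum_small (le_refl 1) 1, pow_zero, if_pos rfl]
  · rw [if_neg (fun h => he h.symm), Finset.sum_empty, if_neg he]

lemma gc_zero_base (e : ℕ) : gc 0 e = if e = 0 then 1 else 0 := by
  rw [gc, Tset, univ_perm_zero, Finset.filter_singleton, if_pos avoids_zero,
    Finset.filter_singleton]
  rw [ldes_small (by omega) 1]
  by_cases he : e = 0
  · rw [he, if_pos rfl, Finset.sum_singleton, if_pos rfl]
  · rw [if_neg (fun h => he h.symm), Finset.sum_empty, if_neg he]

lemma altsum (d M : ℕ) (hd : d ≤ M) :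
    ∑ x ∈ Finset.Icc d M, (-1 : ℤ) ^ (M - x) = if Even (M - d) then 1 else 0 := by
  induction M, hd using Nat.le_induction with
  | base =>
    rw [Finset.Icc_self, Finset.sum_singleton, Nat.sub_self, pow_zero, if_pos Even.zero]
  | succ M hdM ih =>
    have hsplit : Finset.Icc d (M + 1) = Finset.Icc d M ∪ {M + 1} := by
      ext x
      simp only [Finset.mem_Icc, Finset.mem_union, Finset.mem_singleton]
      omega
    rw [hsplit, Finset.sum_union (by simp [Finset.disjoint_singleton_right]),
      Finset.sum_singleton, Nat.sub_self, pow_zero]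
    have hpt : ∀ x ∈ Finset.Icc d M,
        (-1 : ℤ) ^ (M + 1 - x) = -((-1 : ℤ) ^ (M - x)) := by
      intro x hx
      rw [Finset.mem_Icc] at hx
      rw [show M + 1 - x = (M - x) + 1 by omega, pow_succ]
      ring
    rw [Finset.sum_congr rfl hpt, Finset.sum_neg_distrib, ih]
    have he : (M + 1 - d) = (M - d) + 1 := by omega
    simp only [he, Nat.even_add_one]
    by_cases hev : Even (M - d)
    · rw [if_pos hev, if_neg (by simpa using hev)]
      ring
    · rw [if_neg hev, if_pos hev]
      ring

lemma total_even (k : ℕ) :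
    ∑ π ∈ Tset (2 * k + 1 + 1), (-1 : ℤ) ^ invNum π
      = ∑ π ∈ Tset (2 * k + 1),
          (if Odd (ldes π) then (-1 : ℤ) ^ invNum π else 0) := by
  rw [master (2 * k + 1) (fun π => (-1 : ℤ) ^ invNum π)]
  apply Finset.sum_congr rfl
  intro σ _
  have hd : ldes σ ≤ 2 * k + 1 := le_trans (ldes_le_pred σ) (by omega)
  have hpt : ∀ p ∈ univ.filter (fun p : Fin (2 * k + 1 + 1) => ldes σ ≤ (p : ℕ)),
      (-1 : ℤ) ^ invNum (ins σ p)
      = (fun x : ℕ => (-1 : ℤ) ^ invNum σ * (-1 : ℤ) ^ (2 * k + 1 - x)) (p : ℕ) := by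
    intro p _
    rw [invNum_ins, pow_add]
  rw [Finset.sum_congr rfl hpt, sum_filter_fin_eq (ldes σ)
    (fun x : ℕ => (-1 : ℤ) ^ invNum σ * (-1 : ℤ) ^ (2 * k + 1 - x))]
  rw [← Finset.mul_sum, altsum (ldes σ) (2 * k + 1) hd]
  have hpar : Even (2 * k + 1 - ldes σ) ↔ Odd (ldes σ) := by
    rw [Nat.even_sub hd, Nat.odd_iff, Nat.even_iff, Nat.even_iff]
    omega
  by_cases ho : Odd (ldes σ)
  · rw [if_pos (hpar.mpr ho), if_pos ho, mul_one]
  · rw [if_neg (fun h => ho (hpar.mp h)), if_neg ho, mul_zero]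

lemma odd_partition (N : ℕ) :
    ∑ π ∈ Tset N, (if Odd (ldes π) then (-1 : ℤ) ^ invNum π else 0)
      = ∑ e ∈ Finset.range (N + 1), (if Odd e then cs N e else 0) := by
  have hmaps : ∀ π ∈ Tset N, ldes π ∈ Finset.range (N + 1) := by
    intro π _
    rw [Finset.mem_range]
    have := ldes_le_pred π
    omega
  rw [← Finset.sum_fiberwise_of_maps_to hmaps
    (fun π => if Odd (ldes π) then (-1 : ℤ) ^ invNum π else 0)]
  apply Finset.sum_congr rfl
  intro e _
  by_cases ho : Odd e
  · rw [if_pos ho, cs]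
    apply Finset.sum_congr rfl
    intro π hπ
    rw [Finset.mem_filter] at hπ
    rw [if_pos (hπ.2 ▸ ho)]
  · rw [if_neg ho]
    apply Finset.sum_eq_zero
    intro π hπ
    rw [Finset.mem_filter] at hπ
    rw [if_neg (hπ.2 ▸ ho)]

lemma main_ind (n : ℕ) :
    (∀ d, cs (2 * n + 1) (2 * d) = gc n d) ∧ (∀ e, Odd e → cs (2 * n + 1) e = 0) := by
  induction n with
  | zero =>
    constructor
    · intro d
      rw [show 2 * 0 + 1 = 1 by ring, cs_one, gc_zero_base]
      by_cases hd : d = 0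
      · rw [hd]
      · rw [if_neg (by omega), if_neg hd]
    · intro e he
      rw [show 2 * 0 + 1 = 1 by ring, cs_one, if_neg (by rcases he with ⟨r, hr⟩; omega)]
  | succ n ih =>
    obtain ⟨ihE, ihO⟩ := ih
    -- partial sums at level 2n+1
    have hS1 : ∀ d, Scs (2 * n + 1) (2 * d) = Sg n d ∧ Scs (2 * n + 1) (2 * d + 1) = Sg n d := by
      intro d
      induction d with
      | zero =>
        have h0 : Scs (2 * n + 1) 0 = Sg n 0 := by
          rw [Scs_zero, Sg_zero, show (0 : ℕ) = 2 * 0 by ring]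
          exact ihE 0
        constructor
        · rw [show 2 * 0 = 0 by ring]; exact h0
        · rw [show 2 * 0 + 1 = 0 + 1 by ring, Scs_succ, ihO 1 (by decide), add_zero]
          exact h0
      | succ d ihd =>
        have hE2 : Scs (2 * n + 1) (2 * (d + 1)) = Sg n (d + 1) := by
          rw [show 2 * (d + 1) = (2 * d + 1) + 1 by ring, Scs_succ, ihd.2,
            show (2 * d + 1) + 1 = 2 * (d + 1) by ring, ihE (d + 1), Sg_succ]
        refine ⟨hE2, ?_⟩
        rw [Scs_succ, hE2, ihO (2 * (d + 1) + 1) ⟨d + 1, by ring⟩, add_zero]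
    -- values of cs at level 2n+2
    have hA0 : cs (2 * n + 2) 0 = gc n 0 := by
      rw [show 2 * n + 2 = (2 * n + 1) + 1 by ring, cs_rec, if_neg (by omega), add_zero,
        show (0 : ℕ) = 2 * 0 by ring]
      exact ihE 0
    have hAe : ∀ d, 1 ≤ d → d ≤ n → cs (2 * n + 2) (2 * d) = gc n d + Sg n (d - 1) := by
      intro d h1 h2
      rw [show 2 * n + 2 = (2 * n + 1) + 1 by ring, cs_rec, if_pos (by omega), ihE d]
      congr 1
      rw [show 2 * n + 1 + 1 - 2 * d = 2 * (n + 1 - d) by omega,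
        Even.neg_one_pow ⟨n + 1 - d, by ring⟩, one_mul,
        show 2 * d - 1 = 2 * (d - 1) + 1 by omega]
      exact (hS1 (d - 1)).2
    have hAbig : ∀ d, n + 1 ≤ d → cs (2 * n + 2) (2 * d) = gc n d := by
      intro d hd
      rw [show 2 * n + 2 = (2 * n + 1) + 1 by ring, cs_rec, if_neg (by omega), add_zero]
      exact ihE d
    have hOe : ∀ d, d ≤ n → cs (2 * n + 2) (2 * d + 1) = - Sg n d := by
      intro d hd
      rw [show 2 * n + 2 = (2 * n + 1) + 1 by ring, cs_rec, if_pos (by omega),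
        ihO (2 * d + 1) ⟨d, by ring⟩, zero_add,
        show 2 * n + 1 + 1 - (2 * d + 1) = 2 * (n - d) + 1 by omega,
        Odd.neg_one_pow ⟨n - d, by ring⟩,
        show 2 * d + 1 - 1 = 2 * d by omega, (hS1 d).1]
      ring
    have hObig : ∀ d, n + 1 ≤ d → cs (2 * n + 2) (2 * d + 1) = 0 := by
      intro d hd
      rw [show 2 * n + 2 = (2 * n + 1) + 1 by ring, cs_rec, if_neg (by omega), add_zero]
      exact ihO (2 * d + 1) ⟨d, by ring⟩
    -- partial sums at level 2n+2
    have hG : ∀ d, d ≤ n → Scs (2 * n + 2) (2 * d) = Sg n d ∧ Scs (2 * n + 2) (2 * d + 1) = 0 := by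
      intro d
      induction d with
      | zero =>
        intro _
        have h0 : Scs (2 * n + 2) (2 * 0) = Sg n 0 := by
          rw [show 2 * 0 = 0 by ring, Scs_zero, hA0, Sg_zero]
        refine ⟨h0, ?_⟩
        rw [Scs_succ, h0, hOe 0 (by omega)]
        ring
      | succ d ihd =>
        intro hdn
        have hprev := ihd (by omega)
        have hE2 : Scs (2 * n + 2) (2 * (d + 1)) = Sg n (d + 1) := by
          rw [show 2 * (d + 1) = (2 * d + 1) + 1 by ring, Scs_succ, hprev.2, zero_add,
            show (2 * d + 1) + 1 = 2 * (d + 1) by ring, hAe (d + 1) (by omega) hdn,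
            show d + 1 - 1 = d by omega, Sg_succ, add_comm (Sg n d) (gc n (d + 1))]
        refine ⟨hE2, ?_⟩
        rw [Scs_succ, hE2, hOe (d + 1) hdn]
        ring
    constructor
    · intro d
      rw [show 2 * (n + 1) + 1 = (2 * n + 2) + 1 by ring]
      rcases Nat.eq_zero_or_pos d with rfl | hd1
      · rw [show 2 * 0 = 0 by ring, cs_rec, if_neg (by omega), add_zero, hA0,
          gc_rec, if_neg (by omega), add_zero]
      · rcases le_or_gt d (n + 1) with hdle | hdgt
        · have hScs0 : Scs (2 * n + 2) (2 * d - 1) = 0 := by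
            rw [show 2 * d - 1 = 2 * (d - 1) + 1 by omega]
            exact (hG (d - 1) (by omega)).2
          rw [cs_rec, if_pos (by omega), hScs0, mul_zero, add_zero]
          rcases le_or_gt d n with hdn | hdn
          · rw [hAe d hd1 hdn, gc_rec, if_pos (by omega)]
          · have hdeq : d = n + 1 := by omega
            rw [hdeq, hAbig (n + 1) (le_refl _), gc_rec, if_neg (by omega), add_zero]
        · rw [cs_rec, if_neg (by omega), add_zero, hAbig d (by omega),
            gc_rec, if_neg (by omega), add_zero]
    · intro e he
      obtain ⟨d, rfl⟩ := he
      rw [show 2 * (n + 1) + 1 = (2 * n + 2) + 1 by ring]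
      rcases le_or_gt d n with hdn | hdn
      · rw [cs_rec, if_pos (by omega), hOe d hdn,
          show 2 * d + 1 - 1 = 2 * d by omega, (hG d hdn).1,
          show 2 * n + 2 + 1 - (2 * d + 1) = 2 * (n + 1 - d) by omega,
          Even.neg_one_pow ⟨n + 1 - d, by ring⟩, one_mul]
        ring
      · rw [cs_rec, if_neg (by omega), add_zero]
        exact hObig d (by omega)

end SB

open SB in
theorem sign_balance_even (n : ℕ) (hn : 1 ≤ n) :
    ((Tset (2 * n)).filter (fun π => Even (invNum π))).card =
        ((Tset (2 * n)).filter (fun π => Odd (invNum π))).card ∧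
      ∑ π ∈ Tset (2 * n), (-1 : ℤ) ^ invNum π = 0 := by
  obtain ⟨k, rfl⟩ : ∃ k, n = k + 1 := ⟨n - 1, by omega⟩
  have hsum : ∑ π ∈ Tset (2 * (k + 1)), (-1 : ℤ) ^ invNum π = 0 := by
    rw [show 2 * (k + 1) = 2 * k + 1 + 1 by ring, total_even k, odd_partition (2 * k + 1)]
    apply Finset.sum_eq_zero
    intro e _
    by_cases ho : Odd e
    · rw [if_pos ho, (main_ind k).2 e ho]
    · rw [if_neg ho]
  refine ⟨?_, hsum⟩
  have hfilter : (Tset (2 * (k + 1))).filter (fun π => Odd (invNum π))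
      = (Tset (2 * (k + 1))).filter (fun π => ¬ Even (invNum π)) := by
    apply Finset.filter_congr
    intro π _
    rw [← Nat.not_even_iff_odd]
  have hsplit := Finset.sum_filter_add_sum_filter_not (Tset (2 * (k + 1)))
      (fun π => Even (invNum π)) (fun π => (-1 : ℤ) ^ invNum π)
  have hE : ∑ π ∈ (Tset (2 * (k + 1))).filter (fun π => Even (invNum π)),
      (-1 : ℤ) ^ invNum π
      = (((Tset (2 * (k + 1))).filter (fun π => Even (invNum π))).card : ℤ) := by
    rw [Finset.sum_congr rfl
      (fun π hπ => Even.neg_one_pow (Finset.mem_filter.mp hπ).2),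
      Finset.sum_const, nsmul_eq_mul, mul_one]
  have hO : ∑ π ∈ (Tset (2 * (k + 1))).filter (fun π => ¬ Even (invNum π)),
      (-1 : ℤ) ^ invNum π
      = -(((Tset (2 * (k + 1))).filter (fun π => ¬ Even (invNum π))).card : ℤ) := by
    rw [Finset.sum_congr rfl (fun π hπ =>
      Odd.neg_one_pow (Nat.not_even_iff_odd.mp (Finset.mem_filter.mp hπ).2)),
      Finset.sum_const, nsmul_eq_mul, mul_neg_one]
  rw [hE, hO, hsum] at hsplit
  rw [hfilter]
  omega
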